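/- For every x in the special orthogonal group SO(n) and all indices 1 ≤ j, k, α, β ≤ n: Σ_{1≤r<s≤n} (x·Y_rs·Y_rs)_{jα} = −((n−1)/2)·x_{jα}, and Σ_{1≤r<s≤n} (x·Y_rs)_{jα}·(x·Y_rs)_{kβ} = −(1/2)·(x_{kα}·x_{jβ} − δ_{kj}·δ_{αβ}). Equivalently, the matrix-coefficient functions x_{jα} of the standard representation of SO(n) satisfy τ(x_{jα}) = −((n−1)/2)·x_{jα} and κ(x_{jα}, x_{kβ}) = −(1/2)·(x_{kα}·x_{jβ} − δ_{kj}·δ_{αβ}). -/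

import Mathlib

open Matrix

/-- The matrix `Y_rs ∈ ℝ^{n×n}` with `(r,s)`-entry `1/√2`, `(s,r)`-entry `-1/√2` and
all other entries `0`; for `r < s` these form the canonical orthonormal basis of the
Lie algebra `so(n)`. -/
noncomputable def Yso (n : ℕ) (r s : Fin n) : Matrix (Fin n) (Fin n) ℝ :=
  (Real.sqrt 2)⁻¹ • (Matrix.single r s 1 - Matrix.single s r 1)

/-- The special orthogonal group `SO(n) = {x : x·xᵀ = 1, det x = 1}`. -/
def SOGroup (n : ℕ) : Set (Matrix (Fin n) (Fin n) ℝ) :=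
  {x | x * x.transpose = 1 ∧ x.det = 1}

lemma Yso_swap (n : ℕ) (r s : Fin n) : Yso n s r = - Yso n r s := by
  simp [Yso]; ring_nf; module

lemma Yso_diag (n : ℕ) (r : Fin n) : Yso n r r = 0 := by
  simp [Yso]

lemma mulY (n : ℕ) (x : Matrix (Fin n) (Fin n) ℝ) (r s j α : Fin n) :
    (x * Yso n r s) j α =
      (Real.sqrt 2)⁻¹ * ((if s = α then x j r else 0) - (if r = α then x j s else 0)) := by
  simp only [Matrix.mul_apply, Yso, Matrix.single, Matrix.smul_apply, Matrix.sub_apply,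
    Matrix.of_apply, smul_eq_mul, mul_sub, sub_mul, mul_ite, ite_mul, mul_one, mul_zero, zero_mul,
    one_mul, ite_and, Finset.sum_sub_distrib, Finset.sum_ite_eq, Finset.mem_univ, if_true]
  ring_nf

lemma half_sum {n : ℕ} (f : Fin n → Fin n → ℝ) (hsymm : ∀ r s, f s r = f r s)
    (hdiag : ∀ r, f r r = 0) :
    (∑ r : Fin n, ∑ s : Fin n, if r < s then f r s else 0)
      = (1/2) * ∑ r : Fin n, ∑ s : Fin n, f r s := by
  have key : ∀ r s : Fin n, f r s = (if r < s then f r s else 0) + (if s < r then f r s else 0) := by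
    intro r s
    rcases lt_trichotomy r s with h | h | h
    · simp [h, asymm h]
    · subst h; simp [hdiag]
    · simp [h, asymm h, not_lt_of_gt h]
  have h2 : (∑ r : Fin n, ∑ s : Fin n, f r s)
      = (∑ r : Fin n, ∑ s : Fin n, if r < s then f r s else 0)
        + (∑ r : Fin n, ∑ s : Fin n, if s < r then f r s else 0) := by
    rw [← Finset.sum_add_distrib]
    simp_rw [← Finset.sum_add_distrib]
    exact Finset.sum_congr rfl fun r _ => Finset.sum_congr rfl fun s _ => key r s
  have h3 : (∑ r : Fin n, ∑ s : Fin n, if s < r then f r s else 0)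
      = (∑ r : Fin n, ∑ s : Fin n, if r < s then f r s else 0) := by
    rw [Finset.sum_comm]
    exact Finset.sum_congr rfl fun r _ => Finset.sum_congr rfl fun s _ => by
      rcases lt_or_ge r s with h | h <;> simp [h, hsymm]
  rw [h3] at h2
  linarith

lemma tau_full (n : ℕ) (x : Matrix (Fin n) (Fin n) ℝ) (j α : Fin n) :
    (∑ r : Fin n, ∑ s : Fin n, (x * Yso n r s * Yso n r s) j α)
      = (1 - (n:ℝ)) * x j α := by
  have c2 : (Real.sqrt 2)⁻¹ * (Real.sqrt 2)⁻¹ = 1/2 := by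
    rw [← mul_inv, Real.mul_self_sqrt (by norm_num)]; norm_num
  have e1 : ∀ r s : Fin n, (x * Yso n r s * Yso n r s) j α =
      (Real.sqrt 2)⁻¹ *
        ((if s = α then (Real.sqrt 2)⁻¹ * ((if s = r then x j r else 0) - x j s) else 0)
        - (if r = α then (Real.sqrt 2)⁻¹ * (x j r - (if r = s then x j s else 0)) else 0)) := by
    intro r s
    rw [mulY n (x * Yso n r s) r s j α, mulY, mulY]
    simp
  simp_rw [e1]
  simp only [mul_sub, mul_ite, mul_zero, Finset.sum_sub_distrib, Finset.sum_ite_eq,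
    Finset.sum_ite_eq', Finset.mem_univ, if_true, Finset.sum_const, Finset.card_univ,
    Fintype.card_fin, nsmul_eq_mul]
  have hleft : ∀ r : Fin n, (∑ s : Fin n, if r = α then
        (Real.sqrt 2)⁻¹ * ((Real.sqrt 2)⁻¹ * x j r)
          - (if r = s then (Real.sqrt 2)⁻¹ * ((Real.sqrt 2)⁻¹ * x j s) else 0) else 0)
      = if r = α then (n:ℝ) * ((Real.sqrt 2)⁻¹ * ((Real.sqrt 2)⁻¹ * x j α))
          - (Real.sqrt 2)⁻¹ * ((Real.sqrt 2)⁻¹ * x j α) else 0 := by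
    intro r
    rcases eq_or_ne r α with h | h
    · subst h
      simp [Finset.sum_sub_distrib, Finset.sum_ite_eq, Finset.card_univ, mul_comm]
    · simp [h]
  rw [Finset.sum_congr rfl fun r _ => hleft r]
  simp only [Finset.sum_ite_eq', Finset.mem_univ, if_true]
  linear_combination ((2:ℝ) - 2*(n:ℝ)) * x j α * c2

lemma kappa_full (n : ℕ) (x : Matrix (Fin n) (Fin n) ℝ)
    (horth : ∀ a b : Fin n, (∑ l : Fin n, x a l * x b l) = if a = b then 1 else 0)
    (j k α β : Fin n) :
    (∑ r : Fin n, ∑ s : Fin n, (x * Yso n r s) j α * (x * Yso n r s) k β)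
      = (if α = β then 1 else 0) * (if j = k then 1 else 0) - x j β * x k α := by
  have c2 : (Real.sqrt 2)⁻¹ * (Real.sqrt 2)⁻¹ = 1/2 := by
    rw [← mul_inv, Real.mul_self_sqrt (by norm_num)]; norm_num
  simp only [mulY, mul_sub, sub_mul, mul_ite, ite_mul, mul_zero, zero_mul,
    Finset.sum_sub_distrib, Finset.sum_ite_irrel, Finset.sum_const_zero,
    Finset.sum_ite_eq', Finset.mem_univ, if_true]
  have hsum : (∑ l : Fin n, (Real.sqrt 2)⁻¹ * x j l * ((Real.sqrt 2)⁻¹ * x k l))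
      = (1/2) * (if j = k then 1 else 0) := by
    rw [← horth j k, Finset.mul_sum]
    exact Finset.sum_congr rfl fun l _ => by linear_combination x j l * x k l * c2
  have hc : (Real.sqrt 2)⁻¹ * x j β * ((Real.sqrt 2)⁻¹ * x k α) = (1/2) * (x j β * x k α) := by
    linear_combination x j β * x k α * c2
  rw [hsum, hc]
  rcases eq_or_ne β α with h | h
  · subst h
    rcases eq_or_ne j k with h2 | h2 <;> simp [h2] <;> ring
  · have h' : α ≠ β := fun e => h e.symm
    rcases eq_or_ne j k with h2 | h2 <;> simp [h, h', h2] <;> ring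

/-- Lemma 9.1: the matrix coefficients `x_{jα}` of the standard representation of
`SO(n)` satisfy `τ(x_{jα}) = -((n-1)/2)·x_{jα}` and
`κ(x_{jα}, x_{kβ}) = -(1/2)·(x_{kα}·x_{jβ} - δ_{kj}·δ_{αβ})`, where
`τ(F)(x) = Σ_{r<s} F(x·Y_rs·Y_rs)` and `κ(F,G)(x) = Σ_{r<s} F(x·Y_rs)·G(x·Y_rs)`. -/
theorem stmt_15 (n : ℕ) (hn : 2 ≤ n) (x : Matrix (Fin n) (Fin n) ℝ)
    (hx : x ∈ SOGroup n) (j k α β : Fin n) :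
    (∑ r : Fin n, ∑ s : Fin n, if r < s then (x * Yso n r s * Yso n r s) j α else 0)
      = -(((n : ℝ) - 1) / 2) * x j α ∧
    (∑ r : Fin n, ∑ s : Fin n, if r < s then (x * Yso n r s) j α * (x * Yso n r s) k β else 0)
      = -(1 / 2 : ℝ) *
          (x k α * x j β - (if k = j then 1 else 0) * (if α = β then 1 else 0)) := by
  have horth : ∀ a b : Fin n, (∑ l : Fin n, x a l * x b l) = if a = b then 1 else 0 := by
    intro a b
    have := congrFun (congrFun hx.1 a) b
    simpa [Matrix.mul_apply, Matrix.transpose_apply, Matrix.one_apply] using this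
  constructor
  · rw [half_sum (fun r s => (x * Yso n r s * Yso n r s) j α)
      (fun r s => by simp [Yso_swap n r s, Matrix.mul_neg, Matrix.neg_mul, neg_neg])
      (fun r => by simp [Yso_diag])]
    rw [tau_full]
    ring
  · rw [half_sum (fun r s => (x * Yso n r s) j α * (x * Yso n r s) k β)
      (fun r s => by simp [Yso_swap n r s, Matrix.mul_neg, Matrix.neg_apply])
      (fun r => by simp [Yso_diag])]
    rw [kappa_full n x horth]
    have hkj : (if k = j then (1:ℝ) else 0) = (if j = k then 1 else 0) := by
      rcases eq_or_ne j k with h | h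
      · simp [h]
      · simp [h, Ne.symm h]
    rw [hkj]
    ring
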